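/- Let α ∈ (1,2), let m ≥ 2 be an integer, set h = 1/m and nodes x_i = ih for i = 0, …, m, let φ₀(x) = (1−x)^{α−1}, and let Π_h φ₀ be the piecewise linear interpolant of φ₀ on this uniform mesh, i.e., (Π_h φ₀)(x) = φ₀(x_i) + (φ₀(x_{i+1}) − φ₀(x_i))(x − x_i)/h for x ∈ [x_i, x_{i+1}]. Then there is a constant c = c(α) > 0, independent of m, such that 0 ≤ ∫₀¹ x^{1−α} (φ₀(x) − (Π_h φ₀)(x)) dx ≤ c h^{α}. -/

import Mathlib

open MeasureTheory Set

/-- The singular function `φ₀(x) = (1-x)^{α-1}`. -/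
noncomputable def phi0 (α : ℝ) (x : ℝ) : ℝ := (1 - x) ^ (α - 1)

/-- The piecewise linear interpolant of `f` on the uniform mesh `xᵢ = i/m`, `i = 0, …, m`,
of mesh size `h = 1/m`: on `[xᵢ, xᵢ₊₁]` it equals
`f(xᵢ) + (f(xᵢ₊₁) - f(xᵢ))(x - xᵢ)/h`. -/
noncomputable def interp (m : ℕ) (f : ℝ → ℝ) (x : ℝ) : ℝ :=
  f ((⌊x * m⌋ : ℝ) / m)
    + (f (((⌊x * m⌋ : ℝ) + 1) / m) - f ((⌊x * m⌋ : ℝ) / m))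
      * (x - (⌊x * m⌋ : ℝ) / m) * m



lemma hasDerivAt_phi0 {α x : ℝ} (hx : x < 1) :
    HasDerivAt (phi0 α) (-((α-1) * (1-x) ^ (α-2))) x := by
  have h1 : HasDerivAt (fun y : ℝ => 1 - y) (-1) x := by
    simpa using (hasDerivAt_id x).const_sub 1
  have h2 := h1.rpow_const (p := α - 1) (Or.inl (by nlinarith : (1:ℝ) - x ≠ 0))
  have e : -((α-1) * (1-x) ^ (α-2)) = -1 * (α - 1) * (1 - x) ^ (α - 1 - 1) := by
    rw [show α - 1 - 1 = α - 2 by ring]; ring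
  rw [e]; exact h2

lemma hasDerivAt_phi0' {α x : ℝ} (hx : x < 1) :
    HasDerivAt (fun y : ℝ => -((α-1) * (1-y) ^ (α-2)))
      ((α-1) * (α-2) * (1-x) ^ (α-3)) x := by
  have h1 : HasDerivAt (fun y : ℝ => 1 - y) (-1) x := by
    simpa using (hasDerivAt_id x).const_sub 1
  have h2 := h1.rpow_const (p := α - 2) (Or.inl (by nlinarith : (1:ℝ) - x ≠ 0))
  have h3 := (h2.const_mul (α - 1)).neg
  have : α - 2 - 1 = α - 3 := by ring
  have e : (α-1) * (α-2) * (1-x) ^ (α-3) = -((α - 1) * (-1 * (α - 2) * (1 - x) ^ (α - 2 - 1))) := by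
    rw [this]; ring
  rw [e]; exact h3

lemma phi0_continuous {α : ℝ} (hα : 1 < α) : Continuous (phi0 α) := by
  rw [continuous_iff_continuousAt]
  intro x
  have h1 : ContinuousAt (fun y : ℝ => 1 - y) x := by fun_prop
  have h2 : ContinuousAt (fun t : ℝ => t ^ (α - 1)) (1 - x) :=
    Real.continuousAt_rpow_const _ _ (Or.inr (by linarith))
  exact h2.comp h1

lemma phi0_nonneg {α x : ℝ} (hx : x ≤ 1) : 0 ≤ phi0 α x :=
  Real.rpow_nonneg (by linarith) _

lemma key {α a b x : ℝ} (hα1 : 1 < α) (hα2 : α < 2) (hab : a < b) (hb : b ≤ 1)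
    (hx : x ∈ Ico a b) :
    0 ≤ phi0 α x - (phi0 α a + (phi0 α b - phi0 α a) * ((x - a) / (b - a))) ∧
    (b < 1 → phi0 α x - (phi0 α a + (phi0 α b - phi0 α a) * ((x - a) / (b - a)))
      ≤ (b - a)^2 * ((α-1) * (2-α)) * (1-b) ^ (α-3)) := by
  have hba : (0:ℝ) < b - a := by linarith
  rcases eq_or_lt_of_le hx.1 with rfl | hax
  · have h0 : (a - a) / (b - a) = 0 := by simp
    rw [h0]
    constructor
    · simp
    · intro hb1
      have h1 : (0:ℝ) ≤ (1 - b) ^ (α-3) := Real.rpow_nonneg (by linarith) _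
      have h2 : (0:ℝ) ≤ (α-1) * (2-α) := by nlinarith
      simp only [mul_zero, add_zero, sub_self]
      positivity
  · have hxb := hx.2
    obtain ⟨ξ₁, hξ₁, hs1⟩ := exists_hasDerivAt_eq_slope (phi0 α) _ hax
      ((phi0_continuous hα1).continuousOn)
      (fun y hy => hasDerivAt_phi0 (by linarith [hy.2, hx.2] : y < 1))
    obtain ⟨ξ₂, hξ₂, hs2⟩ := exists_hasDerivAt_eq_slope (phi0 α) _ hxb
      ((phi0_continuous hα1).continuousOn)
      (fun y hy => hasDerivAt_phi0 (by linarith [hy.2] : y < 1))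
    have hξξ : ξ₁ < ξ₂ := lt_trans hξ₁.2 hξ₂.1
    obtain ⟨η, hη, hs3⟩ := exists_hasDerivAt_eq_slope
      (fun y : ℝ => -((α-1) * (1-y) ^ (α-2)))
      (fun y => (α-1) * (α-2) * (1-y) ^ (α-3)) hξξ
      (fun y hy => (hasDerivAt_phi0' (α := α)
        (by linarith [hy.2, hξ₂.2] : y < 1)).continuousAt.continuousWithinAt)
      (fun y hy => hasDerivAt_phi0' (by linarith [hy.2, hξ₂.2] : y < 1))
    set A := -((α-1) * (1-ξ₁) ^ (α-2)) with hA
    set B := -((α-1) * (1-ξ₂) ^ (α-2)) with hB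
    have e1 : phi0 α x - phi0 α a = A * (x - a) := by
      rw [hs1, div_mul_cancel₀ _ (by linarith : x - a ≠ 0)]
    have e2 : phi0 α b - phi0 α x = B * (b - x) := by
      rw [hs2, div_mul_cancel₀ _ (by linarith : b - x ≠ 0)]
    have e3 : A - B = (α-1) * (2-α) * (1-η) ^ (α-3) * (ξ₂ - ξ₁) := by
      have h := hs3
      rw [eq_div_iff (by linarith : ξ₂ - ξ₁ ≠ 0)] at h
      nlinarith [h]
    set D := (α-1) * (2-α) * (1-η) ^ (α-3) with hD
    have hDpos : 0 ≤ D := by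
      have h1 : (0:ℝ) ≤ (1-η) ^ (α-3) := Real.rpow_nonneg (by linarith [hη.2, hξ₂.2]) _
      have h2 : (0:ℝ) ≤ (α-1) * (2-α) := by nlinarith
      rw [hD]; exact mul_nonneg h2 h1
    have hE : phi0 α x - (phi0 α a + (phi0 α b - phi0 α a) * ((x - a) / (b - a)))
        = (x - a) * (b - x) * (D * (ξ₂ - ξ₁)) / (b - a) := by
      rw [← e3]
      have hφx : phi0 α x = A * (x - a) + phi0 α a := by linarith
      have hφb : phi0 α b = B * (b - x) + A * (x - a) + phi0 α a := by linarith
      rw [hφx, hφb]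
      field_simp
      ring
    rw [hE]
    have hw1 : 0 < x - a := by linarith
    have hw2 : 0 < b - x := by linarith
    have hw3 : 0 < ξ₂ - ξ₁ := by linarith
    constructor
    · positivity
    · intro hb1
      have hDle : D ≤ (α-1) * (2-α) * (1-b) ^ (α-3) := by
        have h1 : (1-η) ^ (α-3) ≤ (1-b) ^ (α-3) :=
          Real.rpow_le_rpow_of_nonpos (by linarith) (by linarith [hη.2, hξ₂.2]) (by linarith)
        have h2 : (0:ℝ) ≤ (α-1)*(2-α) := by nlinarith
        exact mul_le_mul_of_nonneg_left h1 h2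
      rw [div_le_iff₀ hba]
      have hrb : (0:ℝ) ≤ (1-b) ^ (α-3) := Real.rpow_nonneg (by linarith) _
      have h2 : (0:ℝ) ≤ (α-1) * (2-α) := by nlinarith
      have l1 : x - a ≤ b - a := by linarith
      have l2 : b - x ≤ b - a := by linarith
      have l3 : ξ₂ - ξ₁ ≤ b - a := by
        have := hξ₁.1; have := hξ₂.2; linarith
      have hDmax : (0:ℝ) ≤ (α-1) * (2-α) * (1-b) ^ (α-3) := mul_nonneg h2 hrb
      calc (x - a) * (b - x) * (D * (ξ₂ - ξ₁))
          ≤ (b - a) * (b - a) * (((α-1) * (2-α) * (1-b) ^ (α-3)) * (b - a)) := by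
            apply mul_le_mul
            · exact mul_le_mul l1 l2 hw2.le (by linarith)
            · exact mul_le_mul hDle l3 hw3.le hDmax
            · exact mul_nonneg hDpos hw3.le
            · exact mul_nonneg (by linarith) (by linarith)
        _ = (b - a)^2 * ((α-1) * (2-α)) * (1-b) ^ (α-3) * (b - a) := by ring

/-- basic facts about the mesh interval containing `x`. -/
lemma mesh_facts {m : ℕ} (hm : 2 ≤ m) {x : ℝ} (hx : x ∈ Ioo (0:ℝ) 1) :
    let a := ((⌊x * m⌋ : ℤ) : ℝ) / m
    let b := (((⌊x * m⌋ : ℤ) : ℝ) + 1) / m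
    0 ≤ a ∧ a ≤ x ∧ x < b ∧ b ≤ 1 ∧ b - a = 1 / m ∧
      interp m (phi0 α) x = phi0 α a + (phi0 α b - phi0 α a) * ((x - a) / (b - a)) := by
  intro a b
  have hm0 : (0:ℝ) < m := by positivity
  have hfl : (0:ℤ) ≤ ⌊x * m⌋ := Int.floor_nonneg.mpr (by nlinarith [hx.1])
  have h1 : ((⌊x * m⌋ : ℤ) : ℝ) ≤ x * m := Int.floor_le _
  have h2 : x * m < (⌊x * m⌋ : ℤ) + 1 := Int.lt_floor_add_one _
  have h3 : (⌊x * m⌋ : ℤ) < (m : ℤ) := by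
    rw [Int.floor_lt]
    push_cast
    nlinarith [hx.2]
  refine ⟨?_, ?_, ?_, ?_, ?_, ?_⟩
  · have : (0:ℝ) ≤ ((⌊x * m⌋ : ℤ) : ℝ) := by exact_mod_cast hfl
    positivity
  · rw [div_le_iff₀ hm0]; exact h1
  · rw [lt_div_iff₀ hm0]; exact h2
  · have : ((⌊x * m⌋ : ℤ) : ℝ) + 1 ≤ m := by exact_mod_cast h3
    rw [div_le_one hm0]; exact this
  · unfold a b; field_simp; ring
  · show interp m (phi0 α) x = _
    unfold interp
    have hba : b - a = 1 / m := by unfold a b; field_simp; ring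
    rw [hba]
    have : (x - a) / (1 / m) = (x - a) * m := by field_simp
    rw [this]
    ring

lemma two_rpow_le_four {p : ℝ} (hp : p ≤ 2) : (2:ℝ) ^ p ≤ 4 := by
  have h1 : (2:ℝ) ^ p ≤ (2:ℝ) ^ (2:ℝ) := Real.rpow_le_rpow_of_exponent_le one_le_two hp
  have h2 : (2:ℝ) ^ (2:ℝ) = 4 := by
    rw [show (2:ℝ) = ((2:ℕ):ℝ) from by norm_num, Real.rpow_natCast]
    norm_num
  rw [h2] at h1; exact h1

lemma half_rpow {p : ℝ} : ((1:ℝ)/2) ^ p = (2:ℝ) ^ (-p) := by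
  rw [one_div, Real.inv_rpow (by norm_num : (0:ℝ) ≤ 2), ← Real.rpow_neg (by norm_num : (0:ℝ) ≤ 2)]

lemma pt_nonneg {α : ℝ} (hα1 : 1 < α) (hα2 : α < 2) {m : ℕ} (hm : 2 ≤ m)
    {x : ℝ} (hx : x ∈ Ioo (0:ℝ) 1) : 0 ≤ phi0 α x - interp m (phi0 α) x := by
  obtain ⟨h0, hax, hxb, hb1, hba, hi⟩ := mesh_facts (α := α) hm hx
  rw [hi]
  exact (key hα1 hα2 (by rw [← sub_pos, hba]; positivity) hb1 ⟨hax, hxb⟩).1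

lemma pt_le_phi {α : ℝ} (hα1 : 1 < α) (hα2 : α < 2) {m : ℕ} (hm : 2 ≤ m)
    {x : ℝ} (hx : x ∈ Ioo (0:ℝ) 1) :
    phi0 α x - interp m (phi0 α) x ≤ (1 - x) ^ (α - 1) := by
  obtain ⟨h0, hax, hxb, hb1, hba, hi⟩ := mesh_facts (α := α) hm hx
  rw [hi]
  set a := ((⌊x * m⌋ : ℤ) : ℝ) / m
  set b := (((⌊x * m⌋ : ℤ) : ℝ) + 1) / m
  have hab : a < b := by rw [← sub_pos, hba]; positivity
  set lam := (x - a) / (b - a) with hlam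
  have hl0 : 0 ≤ lam := div_nonneg (by linarith) (by linarith)
  have hl1 : lam ≤ 1 := by
    rw [hlam, div_le_one (by linarith)]; linarith
  have ha : 0 ≤ phi0 α a := phi0_nonneg (by linarith)
  have hbn : 0 ≤ phi0 α b := phi0_nonneg hb1
  have hchord : 0 ≤ phi0 α a + (phi0 α b - phi0 α a) * lam := by
    nlinarith [mul_nonneg hbn hl0, mul_nonneg ha (by linarith : 0 ≤ 1 - lam)]
  have : phi0 α x = (1 - x) ^ (α - 1) := rfl
  linarith

lemma pt_upper {α : ℝ} (hα1 : 1 < α) (hα2 : α < 2) {m : ℕ} (hm : 2 ≤ m)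
    {x : ℝ} (hx : x ∈ Ioo (0:ℝ) 1) (hx2 : x < 1 - 1/m) :
    phi0 α x - interp m (phi0 α) x ≤ (1/m)^2 * (1 - x) ^ (α - 3) := by
  obtain ⟨h0, hax, hxb, hb1, hba, hi⟩ := mesh_facts (α := α) hm hx
  rw [hi]
  set a := ((⌊x * m⌋ : ℤ) : ℝ) / m with hadef
  set b := (((⌊x * m⌋ : ℤ) : ℝ) + 1) / m with hbdef
  have hm0 : (0:ℝ) < m := by positivity
  have hab : a < b := by rw [← sub_pos, hba]; positivity
  -- b ≤ 1 - 1/m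
  have hinv : (1/(m:ℝ)) * m = 1 := by field_simp
  have hbm : b ≤ 1 - 1/m := by
    have h3 : (⌊x * m⌋ : ℤ) < (m : ℤ) - 1 := by
      rw [Int.floor_lt]
      push_cast
      nlinarith [mul_lt_mul_of_pos_right hx2 hm0]
    have h4 : ((⌊x * m⌋ : ℤ) : ℝ) + 1 ≤ (m : ℝ) - 1 := by
      have : (⌊x * m⌋ : ℤ) + 1 ≤ (m : ℤ) - 1 := by omega
      exact_mod_cast this
    have h5 : b ≤ ((m:ℝ) - 1) / m := by
      rw [hbdef]
      exact (div_le_div_iff_of_pos_right hm0).mpr h4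
    have h6 : ((m:ℝ) - 1) / m = 1 - 1/m := by
      rw [sub_div, div_self (ne_of_gt hm0), one_div]
    rw [h6] at h5; exact h5
  have hblt1 : b < 1 := by
    have : (0:ℝ) < 1/m := by positivity
    linarith
  have hkey := (key hα1 hα2 hab hblt1.le ⟨hax, hxb⟩).2 hblt1
  refine le_trans hkey ?_
  rw [hba]
  -- (α-1)(2-α) ≤ 1/4 and (1-b)^(α-3) ≤ 4 (1-x)^(α-3)
  have h14 : (α-1) * (2-α) ≤ 1/4 := by nlinarith [sq_nonneg (2*α - 3)]
  have hx1 : (0:ℝ) < 1 - x := by linarith [hx.2]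
  have hhalf : (1 - x) / 2 ≤ 1 - b := by
    -- 1 - x ≤ 1 - b + 1/m ≤ 2(1-b)
    have h5 : 1/m ≤ 1 - b := by linarith
    have h6 : x ≥ a := hax
    have h7 : 1 - x ≤ (1 - b) + 1/m := by
      have : a = b - 1/m := by linarith
      linarith
    linarith
  have hrb : (1 - b) ^ (α-3) ≤ ((1-x)/2) ^ (α-3) :=
    Real.rpow_le_rpow_of_nonpos (by positivity) hhalf (by linarith)
  have hsplit : ((1-x)/2) ^ (α-3) = (1-x)^(α-3) * ((1:ℝ)/2)^(α-3) := by
    rw [div_eq_mul_one_div (1-x) 2, Real.mul_rpow (by linarith) (by norm_num)]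
  have h4b : ((1:ℝ)/2)^(α-3) ≤ 4 := by
    rw [half_rpow]
    exact two_rpow_le_four (by linarith)
  have hxp : (0:ℝ) ≤ (1-x)^(α-3) := Real.rpow_nonneg (by linarith) _
  have hfinal : (1 - b) ^ (α-3) ≤ 4 * (1-x)^(α-3) := by
    calc (1 - b) ^ (α-3) ≤ (1-x)^(α-3) * ((1:ℝ)/2)^(α-3) := by rw [← hsplit]; exact hrb
      _ ≤ (1-x)^(α-3) * 4 := mul_le_mul_of_nonneg_left h4b hxp
      _ = 4 * (1-x)^(α-3) := by ring
  have hsq : (0:ℝ) ≤ (1/m : ℝ)^2 := sq_nonneg _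
  calc (1/m:ℝ)^2 * ((α-1) * (2-α)) * (1-b)^(α-3)
      ≤ (1/m:ℝ)^2 * (1/4) * (4 * (1-x)^(α-3)) := by
        apply mul_le_mul
        · exact mul_le_mul_of_nonneg_left h14 hsq
        · exact hfinal
        · exact Real.rpow_nonneg (by linarith) _
        · positivity
    _ = (1/m:ℝ)^2 * (1-x)^(α-3) := by ring

lemma f_measurable {α : ℝ} (hα1 : 1 < α) (m : ℕ) :
    Measurable (fun x : ℝ => x ^ (1-α) * (phi0 α x - interp m (phi0 α) x)) := by
  have h1 : Measurable (fun x : ℝ => x ^ (1-α)) := by fun_prop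
  have hphi : Measurable (phi0 α) := (phi0_continuous hα1).measurable
  have hfl : Measurable (fun x : ℝ => ((⌊x * m⌋ : ℤ) : ℝ)) := by
    exact Measurable.comp (g := fun n : ℤ => (n : ℝ))
      (measurable_from_top) (Int.measurable_floor.comp (measurable_id.mul_const _))
  have h2 : Measurable (interp m (phi0 α)) := by
    unfold interp
    exact ((hphi.comp (hfl.div_const _)).add
      ((((hphi.comp ((hfl.add_const 1).div_const _)).sub
        (hphi.comp (hfl.div_const _))).mul
        ((measurable_id.sub (hfl.div_const _)))).mul_const _))
  exact h1.mul (hphi.sub h2)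


/-- For `α ∈ (1,2)` there is a constant `c = c(α) > 0`, independent of
`m ≥ 2`, such that `0 ≤ ∫₀¹ x^{1-α} (φ₀(x) - (Π_h φ₀)(x)) dx ≤ c h^α` with `h = 1/m`. -/
theorem stmt19 (α : ℝ) (hα : α ∈ Ioo (1:ℝ) 2) :
    ∃ c > (0:ℝ), ∀ m : ℕ, 2 ≤ m →
      0 ≤ ∫ x in Ioo (0:ℝ) 1, x ^ (1 - α) * (phi0 α x - interp m (phi0 α) x) ∧
      ∫ x in Ioo (0:ℝ) 1, x ^ (1 - α) * (phi0 α x - interp m (phi0 α) x)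
        ≤ c * ((1:ℝ) / m) ^ α := by
  obtain ⟨hα1, hα2⟩ := hα
  have h2α : (0:ℝ) < 2 - α := by linarith
  refine ⟨6/(2-α) + 2, by positivity, ?_⟩
  intro m hm
  set f : ℝ → ℝ := fun x => x ^ (1-α) * (phi0 α x - interp m (phi0 α) x) with hfdef
  have hmR : (2:ℝ) ≤ (m:ℝ) := by exact_mod_cast hm
  have hm0 : (0:ℝ) < m := by linarith
  set h : ℝ := 1/(m:ℝ) with hhdef
  have hh0 : 0 < h := by positivity
  have hh2 : h ≤ 1/2 := by
    rw [hhdef, div_le_div_iff₀ hm0 (by norm_num)]; linarith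
  have hh1 : h ≤ 1 := by linarith
  -- nonnegativity of f on (0,1)
  have hf_nonneg : ∀ x ∈ Ioo (0:ℝ) 1, 0 ≤ f x := fun x hx =>
    mul_nonneg (Real.rpow_nonneg hx.1.le _) (pt_nonneg hα1 hα2 hm hx)
  constructor
  · exact setIntegral_nonneg measurableSet_Ioo hf_nonneg
  -- pieces
  set P₁ : Set ℝ := Ioo 0 (1/2) with hP1
  set P₂ : Set ℝ := Ico (1/2) (1-h) with hP2
  set P₃ : Set ℝ := Ico (1-h) 1 with hP3
  set g₁ : ℝ → ℝ := fun x => (4*h^2) * x ^ (1-α) with hg1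
  set g₂ : ℝ → ℝ := fun x => (2*h^2) * (1-x) ^ (α-3) with hg2
  set g₃ : ℝ → ℝ := fun x => 2 * (1-x) ^ (α-1) with hg3
  -- subset facts
  have hsub1 : P₁ ⊆ Ioo 0 1 := fun x hx => ⟨hx.1, by have := hx.2; linarith⟩
  have hsub2 : P₂ ⊆ Ioo 0 1 := fun x hx => ⟨by have := hx.1; linarith, by have := hx.2; linarith⟩
  have hsub3 : P₃ ⊆ Ioo 0  1 := fun x hx => ⟨by have := hx.1; linarith, hx.2⟩
  -- pointwise bounds on pieces
  have hb₁ : ∀ x ∈ P₁, f x ≤ g₁ x := by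
    intro x hx
    have hx' := hsub1 hx
    have hh2' : (1:ℝ)/(m:ℝ) ≤ 1/2 := hh2
    have he := pt_upper hα1 hα2 hm hx' (by have := hx.2; linarith)
    have h1x : (1:ℝ)/2 ≤ 1 - x := by have := hx.2; linarith
    have hr : (1-x) ^ (α-3) ≤ 4 := by
      calc (1-x) ^ (α-3) ≤ ((1:ℝ)/2) ^ (α-3) :=
            Real.rpow_le_rpow_of_nonpos (by norm_num) h1x (by linarith)
        _ = (2:ℝ) ^ (3-α) := by rw [half_rpow]; ring_nf
        _ ≤ 4 := two_rpow_le_four (by linarith)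
    have he2 : phi0 α x - interp m (phi0 α) x ≤ 4*h^2 := by
      have : (1/(m:ℝ))^2 * (1-x)^(α-3) ≤ (1/(m:ℝ))^2 * 4 :=
        mul_le_mul_of_nonneg_left hr (sq_nonneg _)
      rw [hhdef]; nlinarith [he]
    calc f x ≤ x ^ (1-α) * (4*h^2) :=
          mul_le_mul_of_nonneg_left he2 (Real.rpow_nonneg hx'.1.le _)
      _ = g₁ x := by rw [hg1]; ring
  have hweight2 : ∀ x : ℝ, (1:ℝ)/2 ≤ x → 0 < x → x ^ (1-α) ≤ 2 := by
    intro x hx hx0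
    calc x ^ (1-α) ≤ ((1:ℝ)/2) ^ (1-α) :=
          Real.rpow_le_rpow_of_nonpos (by norm_num) hx (by linarith)
      _ = (2:ℝ) ^ (α-1) := by rw [half_rpow]; ring_nf
      _ ≤ (2:ℝ) ^ (1:ℝ) := Real.rpow_le_rpow_of_exponent_le one_le_two (by linarith)
      _ = 2 := Real.rpow_one 2
  have hb₂ : ∀ x ∈ P₂, f x ≤ g₂ x := by
    intro x hx
    have hx' := hsub2 hx
    have hxh : x < 1 - (1:ℝ)/(m:ℝ) := by have := hx.2; rw [hhdef] at this; linarith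
    have he := pt_upper hα1 hα2 hm hx' hxh
    rw [← hhdef] at he
    have hw := hweight2 x hx.1 hx'.1
    have he0 := pt_nonneg hα1 hα2 hm hx'
    calc f x ≤ 2 * (h^2 * (1-x)^(α-3)) := by
          apply mul_le_mul hw ?_ he0 (by norm_num)
          calc phi0 α x - interp m (phi0 α) x ≤ h^2 * (1-x)^(α-3) := he
            _ = h^2 * (1-x)^(α-3) := rfl
      _ = g₂ x := by rw [hg2]; ring
  have hb₃ : ∀ x ∈ P₃, f x ≤ g₃ x := by
    intro x hx
    have hx' := hsub3 hx
    have he := pt_le_phi hα1 hα2 hm hx'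
    have hw := hweight2 x (by have := hx.1; linarith) hx'.1
    have he0 := pt_nonneg hα1 hα2 hm hx'
    calc f x ≤ 2 * (1-x)^(α-1) := mul_le_mul hw he he0 (by norm_num)
      _ = g₃ x := rfl
  -- integrability of the comparison functions
  have hg₁int : IntegrableOn g₁ P₁ := by
    have := (intervalIntegral.intervalIntegrable_rpow' (a := 0) (b := 1/2) (by linarith : (-1:ℝ) < 1-α))
    rw [intervalIntegrable_iff_integrableOn_Ioc_of_le (by norm_num)] at this
    exact ((this.mono_set Ioo_subset_Ioc_self).const_mul _)
  have hcont2 : ContinuousOn (fun x : ℝ => (1-x) ^ (α-3)) (Icc (1/2) (1-h)) := by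
    intro y hy
    have : (1:ℝ) - y ≠ 0 := by have := hy.2; have := hh0; intro hc; linarith [sub_eq_zero.mp hc]
    exact ((Real.continuousAt_rpow_const _ _ (Or.inl this)).comp
      (by fun_prop : ContinuousAt (fun y : ℝ => 1 - y) y)).continuousWithinAt
  have hg₂int : IntegrableOn g₂ P₂ :=
    (((hcont2.integrableOn_Icc).mono_set Ico_subset_Icc_self).const_mul _)
  have hg₃int : IntegrableOn g₃ P₃ := by
    have : Continuous (fun x : ℝ => (1-x) ^ (α-1)) := phi0_continuous hα1
    exact (((this.integrableOn_Icc (a := 1-h) (b := 1)).mono_set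
      Ico_subset_Icc_self).const_mul _)
  -- integrability of f on the pieces
  have hfmeas := f_measurable hα1 m
  have hfint : ∀ (P : Set ℝ) (g : ℝ → ℝ), MeasurableSet P → P ⊆ Ioo 0 1 →
      IntegrableOn g P → (∀ x ∈ P, f x ≤ g x) → IntegrableOn f P := by
    intro P g hPm hPsub hgint hfg
    apply Integrable.mono' hgint (hfmeas.aestronglyMeasurable.restrict)
    rw [ae_restrict_iff' hPm]
    exact ae_of_all _ fun x hx => by
      rw [Real.norm_of_nonneg (hf_nonneg x (hPsub hx))]; exact hfg x hx
  have hf₁ := hfint P₁ g₁ measurableSet_Ioo hsub1 hg₁int hb₁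
  have hf₂ := hfint P₂ g₂ measurableSet_Ico hsub2 hg₂int hb₂
  have hf₃ := hfint P₃ g₃ measurableSet_Ico hsub3 hg₃int hb₃
  -- splitting the integral
  have hdisj1 : Disjoint P₁ P₂ := by
    rw [Set.disjoint_left]; rintro y hy1 hy2
    exact absurd hy2.1 (by have := hy1.2; linarith)
  have hdisj2 : Disjoint (Ioo (0:ℝ) (1-h)) P₃ := by
    rw [Set.disjoint_left]; rintro y hy1 hy2
    exact absurd hy2.1 (by have := hy1.2; linarith)
  have hsplit1 : P₁ ∪ P₂ = Ioo (0:ℝ) (1-h) :=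
    Ioo_union_Ico_eq_Ioo (by norm_num) (by linarith)
  have hsplit2 : Ioo (0:ℝ) (1-h) ∪ P₃ = Ioo (0:ℝ) 1 :=
    Ioo_union_Ico_eq_Ioo (by linarith) (by linarith)
  have hIeq : ∫ x in Ioo (0:ℝ) 1, f x
      = (∫ x in P₁, f x) + (∫ x in P₂, f x) + (∫ x in P₃, f x) := by
    rw [← hsplit2, setIntegral_union hdisj2 measurableSet_Ico ?_ hf₃, ← hsplit1,
      setIntegral_union hdisj1 measurableSet_Ico hf₁ hf₂]
    rw [← hsplit1]
    exact hf₁.union hf₂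
  -- bound each piece
  have hI₁ : ∫ x in P₁, f x ≤ (4/(2-α)) * h^2 := by
    calc ∫ x in P₁, f x ≤ ∫ x in P₁, g₁ x :=
          setIntegral_mono_on hf₁ hg₁int measurableSet_Ioo hb₁
      _ = (4*h^2) * ∫ x in P₁, x ^ (1-α) := by rw [hg1, integral_const_mul]
      _ ≤ (4/(2-α)) * h^2 := by
          have hint : ∫ x in P₁, x ^ (1-α) = ((1/2:ℝ) ^ (2-α) - 0 ^ (2-α)) / (2-α) := by
            rw [hP1, ← integral_Ioc_eq_integral_Ioo,
              ← intervalIntegral.integral_of_le (by norm_num : (0:ℝ) ≤ 1/2),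
              integral_rpow (Or.inl (by linarith))]
            ring_nf
          rw [hint, Real.zero_rpow (by linarith : (2:ℝ)-α ≠ 0)]
          have hle1 : ((1:ℝ)/2) ^ (2-α) ≤ 1 :=
            Real.rpow_le_one (by norm_num) (by norm_num) (by linarith)
          have h1 : ((1/2:ℝ) ^ (2-α) - 0) / (2-α) ≤ 1/(2-α) :=
            (div_le_div_iff_of_pos_right h2α).mpr (by linarith)
          calc (4*h^2) * (((1/2:ℝ) ^ (2-α) - 0) / (2-α))
              ≤ (4*h^2) * (1/(2-α)) :=
                mul_le_mul_of_nonneg_left h1 (by positivity)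
            _ = (4/(2-α)) * h^2 := by ring
  have hI₂ : ∫ x in P₂, f x ≤ (2/(2-α)) * h^α := by
    have hpow2 : h^2 * h^(α-2) = h^α := by
      rw [← Real.rpow_natCast h 2, ← Real.rpow_add hh0]
      norm_num
    calc ∫ x in P₂, f x ≤ ∫ x in P₂, g₂ x :=
          setIntegral_mono_on hf₂ hg₂int measurableSet_Ico hb₂
      _ = (2*h^2) * ∫ x in P₂, (1-x) ^ (α-3) := by rw [hg2, integral_const_mul]
      _ ≤ (2/(2-α)) * h^α := by
          have hint : ∫ x in P₂, (1-x) ^ (α-3)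
              = ((1/2:ℝ) ^ (α-2) - h ^ (α-2)) / (α-2) := by
            rw [hP2, setIntegral_congr_set Ico_ae_eq_Ioc,
              ← intervalIntegral.integral_of_le (by linarith : (1:ℝ)/2 ≤ 1-h)]
            rw [show (fun x : ℝ => (1-x) ^ (α-3)) = (fun x : ℝ => ((fun u : ℝ => u ^ (α-3)) (1 - x))) from rfl]
            rw [intervalIntegral.integral_comp_sub_left (fun u : ℝ => u ^ (α-3)) 1]
            have h1 : (1:ℝ) - (1-h) = h := by ring
            have h2 : (1:ℝ) - 1/2 = 1/2 := by norm_num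
            rw [h1, h2, integral_rpow (Or.inr ⟨by intro hc; linarith [hc] , 
              Set.notMem_uIcc_of_lt hh0 (by norm_num)⟩)]
            ring_nf
          rw [hint]
          have hhalfpos : (0:ℝ) ≤ (1/2:ℝ) ^ (α-2) := Real.rpow_nonneg (by norm_num) _
          have h1 : ((1/2:ℝ) ^ (α-2) - h ^ (α-2)) / (α-2)
              = (h ^ (α-2) - (1/2:ℝ) ^ (α-2)) / (2-α) := by
            rw [div_eq_div_iff (by linarith) (by linarith)]; ring
          have h2 : (h ^ (α-2) - (1/2:ℝ) ^ (α-2)) / (2-α) ≤ h ^ (α-2) / (2-α) :=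
            (div_le_div_iff_of_pos_right h2α).mpr (by linarith)
          calc (2*h^2) * (((1/2:ℝ) ^ (α-2) - h ^ (α-2)) / (α-2))
              ≤ (2*h^2) * (h ^ (α-2) / (2-α)) := by
                rw [h1]; exact mul_le_mul_of_nonneg_left h2 (by positivity)
            _ = (2/(2-α)) * (h^2 * h^(α-2)) := by ring
            _ = (2/(2-α)) * h^α := by rw [hpow2]
  have hI₃ : ∫ x in P₃, f x ≤ 2 * h^α := by
    calc ∫ x in P₃, f x ≤ ∫ x in P₃, g₃ x :=
          setIntegral_mono_on hf₃ hg₃int measurableSet_Ico hb₃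
      _ = 2 * ∫ x in P₃, (1-x) ^ (α-1) := by rw [hg3, integral_const_mul]
      _ ≤ 2 * h^α := by
          have hint : ∫ x in P₃, (1-x) ^ (α-1) = (h ^ α - 0 ^ α) / α := by
            rw [hP3, setIntegral_congr_set Ico_ae_eq_Ioc,
              ← intervalIntegral.integral_of_le (by linarith : 1-h ≤ (1:ℝ))]
            rw [show (fun x : ℝ => (1-x) ^ (α-1)) = (fun x : ℝ => ((fun u : ℝ => u ^ (α-1)) (1 - x))) from rfl]
            rw [intervalIntegral.integral_comp_sub_left (fun u : ℝ => u ^ (α-1)) 1]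
            have h1 : (1:ℝ) - (1-h) = h := by ring
            have h2 : (1:ℝ) - 1 = 0 := by norm_num
            rw [h1, h2, integral_rpow (Or.inl (by linarith))]
            ring_nf
          rw [hint, Real.zero_rpow (by linarith : α ≠ 0)]
          have hha : (0:ℝ) ≤ h ^ α := Real.rpow_nonneg hh0.le _
          have : (h ^ α - 0) / α ≤ h ^ α := by
            rw [sub_zero, div_le_iff₀ (by linarith)]
            nlinarith
          linarith
  -- combine
  have hpow : h^2 ≤ h^α := by
    have := Real.rpow_le_rpow_of_exponent_ge hh0 hh1 (le_of_lt hα2)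
    rw [← Real.rpow_natCast h 2]
    exact_mod_cast this
  have htotal : ∫ x in Ioo (0:ℝ) 1, f x ≤ (6/(2-α) + 2) * h^α := by
    rw [hIeq]
    have c1 : (4/(2-α)) * h^2 ≤ (4/(2-α)) * h^α :=
      mul_le_mul_of_nonneg_left hpow (by positivity)
    have : (4/(2-α)) * h^α + (2/(2-α)) * h^α + 2*h^α = (6/(2-α) + 2) * h^α := by ring
    linarith
  exact htotal
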